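/- Fix n ≥ 1 and let d : Fin (2n+1) → Bool with v = ∑_k (d k).toNat, and let i, j ∈ Fin (2n+1) with i ≠ j. If 0 < v − (d i).toNat and v − (d i).toNat < 2n (i.e., the count of 'guilty' votes among the 2n judges other than i is strictly between 0 and 2n), then there exists d' : Fin (2n+1) → Bool such that d' i = d i, ∑_k (d' k).toNat = v, and d' j = NOT (d j). Hence judge j's decision cannot be deduced by judge i from the announced count and i's own decision: both values of d j are compatible with i's observations. -/

import Mathlib

/-- Conditional anonymity of the DCP-based protocol: if the count of 'guilty' votes among the
judges other than `i` is strictly between `0` and `2n`, then for any other judge `j` there is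
an alternative decision vector with the same decision of `i`, the same total count, and `j`'s
decision flipped; hence `i` cannot deduce `j`'s decision. -/
theorem dcp_conditional_anonymity (n : ℕ) (hn : 1 ≤ n) (d : Fin (2 * n + 1) → Bool) (v : ℕ)
    (hv : v = ∑ k, (d k).toNat) (i j : Fin (2 * n + 1)) (hij : i ≠ j)
    (hlow : 0 < v - (d i).toNat) (hhigh : v - (d i).toNat < 2 * n) :
    ∃ d' : Fin (2 * n + 1) → Bool,
      d' i = d i ∧ (∑ k, (d' k).toNat) = v ∧ d' j = !(d j) := by
  classical
  have hmem : i ∈ (Finset.univ : Finset (Fin (2 * n + 1))) := Finset.mem_univ i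
  have hsplit : (d i).toNat + ∑ k ∈ Finset.univ.erase i, (d k).toNat = v := by
    rw [hv]; exact Finset.add_sum_erase _ (fun k => (d k).toNat) hmem
  have hcard : (Finset.univ.erase i).card = 2 * n := by
    simp [Finset.card_erase_of_mem hmem]
  have hk : ∃ k, k ≠ i ∧ k ≠ j ∧ d k = !(d j) := by
    by_contra h
    push_neg at h
    have hall : ∀ k, k ≠ i → d k = d j := by
      intro k hki
      by_cases hkj : k = j
      · subst hkj; rfl
      · have := h k hki hkj
        cases hdk : d k <;> cases hdj : d j <;> simp_all
    cases hdj : d j with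
    | true =>
      have h2 : ∑ k ∈ Finset.univ.erase i, (d k).toNat
          = ∑ _k ∈ Finset.univ.erase i, 1 := by
        refine Finset.sum_congr rfl ?_
        intro k hk
        rw [hall k (Finset.ne_of_mem_erase hk), hdj]; rfl
      rw [Finset.sum_const, hcard, smul_eq_mul, mul_one] at h2
      omega
    | false =>
      have h2 : ∑ k ∈ Finset.univ.erase i, (d k).toNat = 0 := by
        refine Finset.sum_eq_zero ?_
        intro k hk
        rw [hall k (Finset.ne_of_mem_erase hk), hdj]; rfl
      omega
  obtain ⟨k, hki, hkj, hdk⟩ := hk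
  refine ⟨Function.update (Function.update d j (!(d j))) k (d j), ?_, ?_, ?_⟩
  · rw [Function.update_of_ne (Ne.symm hki), Function.update_of_ne hij]
  · set d' := Function.update (Function.update d j (!(d j))) k (d j) with hd'
    have hd'j : d' j = !(d j) := by
      rw [hd', Function.update_of_ne (Ne.symm hkj), Function.update_self]
    have hd'k : d' k = d j := by rw [hd', Function.update_self]
    have hjk : j ∈ Finset.univ.erase k := by
      simp [Finset.mem_erase, Ne.symm hkj]
    have hsame : ∑ m ∈ (Finset.univ.erase k).erase j, (d' m).toNat
        = ∑ m ∈ (Finset.univ.erase k).erase j, (d m).toNat := by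
      refine Finset.sum_congr rfl ?_
      intro m hm
      rw [Finset.mem_erase, Finset.mem_erase] at hm
      rw [hd', Function.update_of_ne hm.2.1, Function.update_of_ne hm.1]
    have e1 := Finset.add_sum_erase Finset.univ (fun m => (d' m).toNat) (Finset.mem_univ k)
    have e2 := Finset.add_sum_erase (Finset.univ.erase k) (fun m => (d' m).toNat) hjk
    have f1 := Finset.add_sum_erase Finset.univ (fun m => (d m).toNat) (Finset.mem_univ k)
    have f2 := Finset.add_sum_erase (Finset.univ.erase k) (fun m => (d m).toNat) hjk
    try simp only at e1 e2 f1 f2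
    have hswap : (d' k).toNat + (d' j).toNat = (d k).toNat + (d j).toNat := by
      rw [hd'k, hd'j, hdk]; cases d j <;> rfl
    rw [hv]
    omega
  · rw [Function.update_of_ne (Ne.symm hkj), Function.update_self]
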